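/- arXiv:2001.10250 — 2 statements merged into one kernel-verified Lean document; each statement's English description precedes it below -/
import Mathlib

section
/- Let n ≥ 1 and let M be an invertible real n×n matrix. There exists a symmetric positive definite matrix P with M P⁻¹ Mᵀ = P if and only if there exist an invertible real matrix C and a real orthogonal matrix U such that M = C U Cᵀ (i.e., M is ℝ-congruent to an orthogonal matrix). -/
open Matrix

lemma aux_isUnit_transpose {n : ℕ} {C : Matrix (Fin n) (Fin n) ℝ} (hC : IsUnit C) :
    IsUnit Cᵀ := by
  rw [Matrix.isUnit_iff_isUnit_det, det_transpose, ← Matrix.isUnit_iff_isUnit_det]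
  exact hC

lemma aux_posDef_mul_transpose {n : ℕ} {C : Matrix (Fin n) (Fin n) ℝ} (hC : IsUnit C) :
    (C * Cᵀ).PosDef := by
  have hsemi : (C * Cᵀ).PosSemidef := by
    simpa [conjTranspose_eq_transpose_of_trivial] using
      Matrix.posSemidef_self_mul_conjTranspose C
  refine posDef_iff_dotProduct_mulVec.mpr ⟨hsemi.1, fun x hx => ?_⟩
  refine lt_of_le_of_ne (hsemi.dotProduct_mulVec_nonneg x) fun h => ?_
  have hy : Cᵀ *ᵥ x ≠ 0 := by
    intro h0
    exact hx <| (Matrix.mulVec_injective_iff_isUnit.mpr (aux_isUnit_transpose hC)).eq_iff.mp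
      (by simpa using h0)
  apply hy
  rw [← dotProduct_star_self_eq_zero (v := Cᵀ *ᵥ x)]
  have : dotProduct (star x) ((C * Cᵀ) *ᵥ x) = dotProduct (star (Cᵀ *ᵥ x)) (Cᵀ *ᵥ x) := by
    simp [← Matrix.mulVec_mulVec, Matrix.dotProduct_mulVec, Matrix.mulVec_transpose,
      star_trivial]
  rw [← this, ← h]

theorem stmt_10 (n : ℕ) (hn : 1 ≤ n) (M : Matrix (Fin n) (Fin n) ℝ) (hM : IsUnit M) :
    (∃ P : Matrix (Fin n) (Fin n) ℝ, P.PosDef ∧ M * P⁻¹ * Mᵀ = P) ↔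
      (∃ C U : Matrix (Fin n) (Fin n) ℝ, IsUnit C ∧ U * Uᵀ = 1 ∧ M = C * U * Cᵀ) := by
  constructor
  · rintro ⟨P, hP, heq⟩
    obtain ⟨S, hSsq, hSsymm⟩ : ∃ S : Matrix (Fin n) (Fin n) ℝ, S * S = P ∧ Sᵀ = S := by
      open scoped MatrixOrder in
      exact ⟨CFC.sqrt P, CFC.sqrt_mul_sqrt_self P (nonneg_iff_posSemidef.mpr hP.posSemidef),
        by simpa [conjTranspose_eq_transpose_of_trivial, Matrix.IsSymm] using
          (nonneg_iff_posSemidef.mp (CFC.sqrt_nonneg P)).1⟩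
    have hSunit : IsUnit S := by
      rw [Matrix.isUnit_iff_isUnit_det]
      have hdet : S.det * S.det = P.det := by rw [← det_mul, hSsq]
      have : P.det ≠ 0 := hP.det_pos.ne'
      have hd : S.det ≠ 0 := fun h => this (by rw [← hdet, h, mul_zero])
      exact hd.isUnit
    have hSinv : IsUnit S⁻¹ := (Matrix.isUnit_nonsing_inv_iff).mpr hSunit
    letI := hSunit.invertible
    have hPinv : P⁻¹ = S⁻¹ * S⁻¹ := by rw [← hSsq, Matrix.mul_inv_rev]
    refine ⟨S, S⁻¹ * M * S⁻¹, hSunit, ?_, ?_⟩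
    · have hUT : (S⁻¹ * M * S⁻¹)ᵀ = S⁻¹ * Mᵀ * S⁻¹ := by
        rw [transpose_mul, transpose_mul, transpose_nonsing_inv, hSsymm]
        simp only [mul_assoc]
      rw [hUT]
      calc S⁻¹ * M * S⁻¹ * (S⁻¹ * Mᵀ * S⁻¹)
          = S⁻¹ * (M * (S⁻¹ * S⁻¹) * Mᵀ) * S⁻¹ := by simp only [mul_assoc]
        _ = S⁻¹ * P * S⁻¹ := by rw [← hPinv, heq]
        _ = S⁻¹ * (S * S) * S⁻¹ := by rw [hSsq]
        _ = (S⁻¹ * S) * (S * S⁻¹) := by simp only [mul_assoc]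
        _ = 1 := by rw [Matrix.nonsing_inv_mul _ (isUnit_iff_isUnit_det _ |>.mp hSunit),
              Matrix.mul_nonsing_inv _ (isUnit_iff_isUnit_det _ |>.mp hSunit), one_mul]
    · rw [hSsymm]
      symm
      calc S * (S⁻¹ * M * S⁻¹) * S = (S * S⁻¹) * M * (S⁻¹ * S) := by simp only [mul_assoc]
        _ = M := by rw [Matrix.mul_nonsing_inv _ (isUnit_iff_isUnit_det _ |>.mp hSunit),
              Matrix.nonsing_inv_mul _ (isUnit_iff_isUnit_det _ |>.mp hSunit), one_mul, mul_one]
  · rintro ⟨C, U, hC, hU, hMeq⟩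
    refine ⟨C * Cᵀ, aux_posDef_mul_transpose hC, ?_⟩
    have hCT : IsUnit Cᵀ := aux_isUnit_transpose hC
    have hPinv : (C * Cᵀ)⁻¹ = (Cᵀ)⁻¹ * C⁻¹ := Matrix.mul_inv_rev _ _
    have hMT : (C * U * Cᵀ)ᵀ = C * Uᵀ * Cᵀ := by
      rw [transpose_mul, transpose_mul, transpose_transpose]; simp only [mul_assoc]
    rw [hMeq, hMT, hPinv]
    calc C * U * Cᵀ * ((Cᵀ)⁻¹ * C⁻¹) * (C * Uᵀ * Cᵀ)
        = C * U * (Cᵀ * (Cᵀ)⁻¹) * (C⁻¹ * C) * Uᵀ * Cᵀ := by simp only [mul_assoc]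
      _ = C * (U * Uᵀ) * Cᵀ := by
          rw [Matrix.mul_nonsing_inv _ (isUnit_iff_isUnit_det _ |>.mp hCT),
            Matrix.nonsing_inv_mul _ (isUnit_iff_isUnit_det _ |>.mp hC)]
          simp only [mul_one, one_mul, mul_assoc]
      _ = C * Cᵀ := by rw [hU, mul_one]
end

section
/- Let n ≥ 1, let W be a real orthogonal n×n matrix, let R be an invertible real n×n matrix, and set M = R W Rᵀ. Then the set of symmetric positive definite matrices P satisfying M P⁻¹ Mᵀ = P equals { R G Gᵀ Rᵀ : G invertible real n×n matrix with G W² = W² G and (G Gᵀ) W (G Gᵀ)ᵀ = W }. -/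
open Matrix
open scoped MatrixOrder

private lemma posDef_conj_aux {n : ℕ} {A B : Matrix (Fin n) (Fin n) ℝ}
    (hA : A.PosDef) (hB : IsUnit B) : (Bᴴ * A * B).PosDef := by
  exact hA.conjTranspose_mul_mul_same (Matrix.mulVec_injective_iff_isUnit.mpr hB)

private lemma posDef_conj {n : ℕ} {A B : Matrix (Fin n) (Fin n) ℝ}
    (hA : A.PosDef) (hB : IsUnit B) : (B * A * Bᵀ).PosDef := by
  have h := posDef_conj_aux (B := Bᵀ) hA ((Matrix.isUnit_transpose ..).mpr hB)
  rwa [conjTranspose_eq_transpose_of_trivial, transpose_transpose] at h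

theorem stmt_15 (n : ℕ) (hn : 1 ≤ n) (W R : Matrix (Fin n) (Fin n) ℝ)
    (hW : W * Wᵀ = 1) (hR : IsUnit R) (M : Matrix (Fin n) (Fin n) ℝ)
    (hMdef : M = R * W * Rᵀ) :
    {P : Matrix (Fin n) (Fin n) ℝ | P.PosDef ∧ M * P⁻¹ * Mᵀ = P} =
      {X : Matrix (Fin n) (Fin n) ℝ | ∃ G : Matrix (Fin n) (Fin n) ℝ, IsUnit G ∧
        G * (W * W) = (W * W) * G ∧ (G * Gᵀ) * W * (G * Gᵀ)ᵀ = W ∧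
        X = R * (G * Gᵀ) * Rᵀ} := by
  have hWt : Wᵀ * W = 1 := mul_eq_one_comm.mp hW
  have hRi : IsUnit R⁻¹ := Matrix.isUnit_nonsing_inv_iff.mpr hR
  have hRd : IsUnit R.det := (Matrix.isUnit_iff_isUnit_det R).mp hR
  have hRtd : IsUnit Rᵀ.det := by rwa [Matrix.det_transpose]
  have hRtRt : Rᵀ * Rᵀ⁻¹ = 1 := Matrix.mul_nonsing_inv Rᵀ hRtd
  have hRtiRt : Rᵀ⁻¹ * Rᵀ = 1 := Matrix.nonsing_inv_mul Rᵀ hRtd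
  have e1 : ∀ A : Matrix (Fin n) (Fin n) ℝ, R * (R⁻¹ * A) = A := fun A => by
    rw [← Matrix.mul_assoc, Matrix.mul_nonsing_inv R hRd, Matrix.one_mul]
  have e2 : ∀ A : Matrix (Fin n) (Fin n) ℝ, R⁻¹ * (R * A) = A := fun A => by
    rw [← Matrix.mul_assoc, Matrix.nonsing_inv_mul R hRd, Matrix.one_mul]
  have e3 : ∀ A : Matrix (Fin n) (Fin n) ℝ, Rᵀ * (Rᵀ⁻¹ * A) = A := fun A => by
    rw [← Matrix.mul_assoc, hRtRt, Matrix.one_mul]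
  have e4 : ∀ A : Matrix (Fin n) (Fin n) ℝ, Rᵀ⁻¹ * (Rᵀ * A) = A := fun A => by
    rw [← Matrix.mul_assoc, Matrix.nonsing_inv_mul Rᵀ hRtd, Matrix.one_mul]
  have e5 : ∀ A : Matrix (Fin n) (Fin n) ℝ, W * (Wᵀ * A) = A := fun A => by
    rw [← Matrix.mul_assoc, hW, Matrix.one_mul]
  ext P
  simp only [Set.mem_setOf_eq]
  constructor
  · rintro ⟨hP, hPeq⟩
    obtain ⟨S, hSdef⟩ : ∃ S' : Matrix (Fin n) (Fin n) ℝ, S' = R⁻¹ * P * (R⁻¹)ᵀ := ⟨_, rfl⟩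
    have hSpd : S.PosDef := hSdef ▸ posDef_conj hP hRi
    have hSd : IsUnit S.det := (Matrix.isUnit_iff_isUnit_det S).mp hSpd.isUnit
    have e8 : ∀ A : Matrix (Fin n) (Fin n) ℝ, S⁻¹ * (S * A) = A := fun A => by
      rw [← Matrix.mul_assoc, Matrix.nonsing_inv_mul S hSd, Matrix.one_mul]
    have hPS : P = R * S * Rᵀ := by
      rw [hSdef, Matrix.transpose_nonsing_inv]
      simp only [Matrix.mul_assoc, e1, e2, e3, e4, hRtRt, hRtiRt, Matrix.mul_one]
    have key : W * (S⁻¹ * Wᵀ) = S := by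
      have h := congrArg (fun X => R⁻¹ * X * Rᵀ⁻¹) hPeq
      simp only [hMdef, hPS, Matrix.mul_inv_rev, Matrix.transpose_mul,
        Matrix.transpose_transpose] at h
      simpa only [Matrix.mul_assoc, e1, e2, e3, e4, hRtRt, Matrix.mul_one] using h
    have h1 : W * S⁻¹ = S * W := by
      have h := congrArg (fun X => X * W) key
      simpa only [Matrix.mul_assoc, hWt, Matrix.mul_one] using h
    have hSWS : S * W * S = W := by
      rw [← h1, Matrix.mul_assoc, Matrix.nonsing_inv_mul S hSd, Matrix.mul_one]
    have h2 : S⁻¹ * W = W * S := by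
      have h := congrArg (fun X => S⁻¹ * (X * S)) h1
      simpa only [Matrix.mul_assoc, Matrix.nonsing_inv_mul S hSd, Matrix.mul_one, e8] using h
    have hcomm : S * (W * W) = (W * W) * S := by
      calc S * (W * W) = (S * W) * W := by rw [Matrix.mul_assoc]
        _ = (W * S⁻¹) * W := by rw [h1]
        _ = W * (S⁻¹ * W) := by rw [Matrix.mul_assoc]
        _ = W * (W * S) := by rw [h2]
        _ = (W * W) * S := by rw [Matrix.mul_assoc]
    have hSsd : S.PosSemidef := hSpd.posSemidef
    set G : Matrix (Fin n) (Fin n) ℝ := CFC.sqrt S with hGdef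
    have hGt : Gᵀ = G := by
      rw [← conjTranspose_eq_transpose_of_trivial]
      exact (CFC.sqrt_nonneg S).posSemidef.1
    have hGG : G * G = S := CFC.sqrt_mul_sqrt_self S hSsd.nonneg
    have hGu : IsUnit G := by
      rw [Matrix.isUnit_iff_isUnit_det]
      have : IsUnit (G.det * G.det) := by rw [← Matrix.det_mul, hGG]; exact hSd
      exact (IsUnit.mul_iff.mp this).1
    have hWWo : (W * W) * (W * W)ᵀ = 1 := by
      rw [Matrix.transpose_mul]
      simp only [Matrix.mul_assoc, e5]
      exact hW
    have hWWo' : (W * W)ᵀ * (W * W) = 1 := mul_eq_one_comm.mp hWWo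
    have hTsd : ((W * W) * G * (W * W)ᵀ).PosSemidef := by
      have h := (CFC.sqrt_nonneg S).posSemidef.mul_mul_conjTranspose_same (W * W)
      rwa [conjTranspose_eq_transpose_of_trivial] at h
    have hT2 : ((W * W) * G * (W * W)ᵀ) ^ 2 = S := by
      rw [pow_two]
      calc ((W * W) * G * (W * W)ᵀ) * ((W * W) * G * (W * W)ᵀ)
          = (W * W) * G * (((W * W)ᵀ * (W * W)) * (G * (W * W)ᵀ)) := by
            simp only [Matrix.mul_assoc]
        _ = (W * W) * (G * G) * (W * W)ᵀ := by
            rw [hWWo', Matrix.one_mul]; simp only [Matrix.mul_assoc]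
        _ = S * ((W * W) * (W * W)ᵀ) := by rw [hGG, ← hcomm, Matrix.mul_assoc]
        _ = S := by rw [hWWo, Matrix.mul_one]
    have hTG : (W * W) * G * (W * W)ᵀ = G := (CFC.sqrt_unique (by rw [← pow_two]; exact hT2) hTsd.nonneg).symm
    have hGcomm : G * (W * W) = (W * W) * G := by
      have h := congrArg (fun X => X * (W * W)) hTG
      rw [Matrix.mul_assoc ((W * W) * G), hWWo', Matrix.mul_one] at h
      exact h.symm
    have hSt : Sᵀ = S := by
      rw [← conjTranspose_eq_transpose_of_trivial]; exact hSpd.1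
    refine ⟨G, hGu, hGcomm, ?_, ?_⟩
    · rw [hGt, hGG, hSt]; exact hSWS
    · rw [hGt, hGG]; exact hPS
  · rintro ⟨G, hGu, -, hGW, hX⟩
    obtain ⟨S, hSdef⟩ : ∃ S' : Matrix (Fin n) (Fin n) ℝ, S' = G * Gᵀ := ⟨_, rfl⟩
    rw [← hSdef] at hX hGW
    have hSpd : S.PosDef := by
      have h := posDef_conj (Matrix.PosDef.one) hGu
      rw [Matrix.mul_one] at h
      rwa [hSdef]
    have hSt : Sᵀ = S := by
      rw [← conjTranspose_eq_transpose_of_trivial]; exact hSpd.1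
    have hSd : IsUnit S.det := (Matrix.isUnit_iff_isUnit_det S).mp hSpd.isUnit
    have hSWS : S * W * S = W := by nth_rewrite 2 [← hSt]; exact hGW
    have hPpd : P.PosDef := hX ▸ posDef_conj hSpd hR
    refine ⟨hPpd, ?_⟩
    have hPinv : P⁻¹ = Rᵀ⁻¹ * S⁻¹ * R⁻¹ := by
      rw [hX, Matrix.mul_inv_rev, Matrix.mul_inv_rev, ← Matrix.mul_assoc]
    have h1 : S * W = W * S⁻¹ := by
      have h := congrArg (fun X => X * S⁻¹) hSWS
      rwa [Matrix.mul_assoc, Matrix.mul_nonsing_inv S hSd, Matrix.mul_one] at h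
    have hWSW : W * (S⁻¹ * Wᵀ) = S := by
      rw [← Matrix.mul_assoc, ← h1, Matrix.mul_assoc, hW, Matrix.mul_one]
    rw [hMdef, hPinv, hX]
    have hL : R * W * Rᵀ * (Rᵀ⁻¹ * S⁻¹ * R⁻¹) * (R * W * Rᵀ)ᵀ
        = R * (W * (S⁻¹ * (Wᵀ * Rᵀ))) := by
      simp only [Matrix.transpose_mul, Matrix.transpose_transpose, Matrix.mul_assoc, e3, e1, e2]
    rw [hL]
    have h9 : W * (S⁻¹ * (Wᵀ * Rᵀ)) = S * Rᵀ := by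
      calc W * (S⁻¹ * (Wᵀ * Rᵀ)) = (W * (S⁻¹ * Wᵀ)) * Rᵀ := by simp only [Matrix.mul_assoc]
        _ = S * Rᵀ := by rw [hWSW]
    rw [h9, Matrix.mul_assoc]
end
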